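/- Let (X1, X2) be a random vector such that each Xi has the unit Fréchet distribution and P(X1 ≤ z, X2 ≤ z) = exp(-θ/z) for all z > 0, where θ ∈ [1, 2]. Define Yi = -1 / log(1 - exp(-1/Xi)) for i = 1, 2. Then for every u ∈ (0, 1), with z = -1/log(u): 2·log P(exp(-1/Y1) > u) / log P(exp(-1/Y1) > u, exp(-1/Y2) > u) - 1 = 2/θ - 1. In particular the coefficient χ̄ of the inverted pair equals 2/θ - 1, which is strictly less than 1 whenever θ > 1. -/

import Mathlib

open MeasureTheory ProbabilityTheory Filter Topology

/-- The inverted max-stable transformation `x ↦ -1/log(1 - exp(-1/x))`. -/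
noncomputable def imsTransform (z : ℝ) : ℝ := -1 / Real.log (1 - Real.exp (-1 / z))

lemma aux_measure_lt {Ω : Type*} [MeasurableSpace Ω] (P : Measure Ω) (T : Ω → ℝ) (a : ℝ)
    (h : ∀ w : ℝ, 0 < w → P {ω | T ω ≤ w} = ENNReal.ofReal (Real.exp (a / w)))
    (z : ℝ) (hz : 0 < z) :
    P {ω | T ω < z} = ENNReal.ofReal (Real.exp (a / z)) := by
  have hw : ∀ n : ℕ, 0 < z - z / (n + 2) := by
    intro n
    have hn0 : (0:ℝ) ≤ (n:ℝ) := Nat.cast_nonneg n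
    have h1 : z / ((n:ℝ) + 2) < z := div_lt_self hz (by linarith)
    linarith
  have hmono : Monotone (fun n : ℕ => {ω | T ω ≤ z - z / ((n:ℝ) + 2)}) := by
    intro m n hmn ω hω
    simp only [Set.mem_setOf_eq] at hω ⊢
    have hd : z / ((n:ℝ) + 2) ≤ z / ((m:ℝ) + 2) := by
      gcongr
    linarith
  have hU : {ω | T ω < z} = ⋃ n : ℕ, {ω | T ω ≤ z - z / ((n:ℝ) + 2)} := by
    ext ω
    simp only [Set.mem_iUnion, Set.mem_setOf_eq]
    constructor
    · intro hlt
      have hzt : 0 < z - T ω := by linarith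
      obtain ⟨n, hn⟩ := exists_nat_gt (z / (z - T ω))
      refine ⟨n, ?_⟩
      rw [div_lt_iff₀ hzt] at hn
      have h2 : z / ((n:ℝ) + 2) < z - T ω := by
        rw [div_lt_iff₀ (by positivity)]
        nlinarith
      linarith
    · rintro ⟨n, hn⟩
      have := div_pos hz (show (0:ℝ) < (n:ℝ) + 2 by positivity)
      linarith
  rw [hU, hmono.directed_le.measure_iUnion]
  have hPmono : Monotone (fun n : ℕ => P {ω | T ω ≤ z - z / ((n:ℝ) + 2)}) :=
    fun m n hmn => measure_mono (hmono hmn)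
  have h1 : Tendsto (fun n : ℕ => P {ω | T ω ≤ z - z / ((n:ℝ) + 2)}) atTop
      (𝓝 (⨆ n : ℕ, P {ω | T ω ≤ z - z / ((n:ℝ) + 2)})) := tendsto_atTop_iSup hPmono
  have hwt : Tendsto (fun n : ℕ => z - z / ((n:ℝ) + 2)) atTop (𝓝 z) := by
    have h0 : Tendsto (fun n : ℕ => z / ((n:ℝ) + 2)) atTop (𝓝 0) :=
      tendsto_const_nhds.div_atTop
        (tendsto_atTop_add_const_right _ 2 tendsto_natCast_atTop_atTop)
    simpa using tendsto_const_nhds.sub h0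
  have hcont : ContinuousAt (fun w : ℝ => ENNReal.ofReal (Real.exp (a / w))) z := by
    exact ENNReal.continuous_ofReal.continuousAt.comp
      (Real.continuous_exp.continuousAt.comp (continuousAt_const.div continuousAt_id hz.ne'))
  have h2 : Tendsto (fun n : ℕ => P {ω | T ω ≤ z - z / ((n:ℝ) + 2)}) atTop
      (𝓝 (ENNReal.ofReal (Real.exp (a / z)))) := by
    have := hcont.tendsto.comp hwt
    refine this.congr fun n => ?_
    exact (h _ (hw n)).symm
  exact tendsto_nhds_unique h1 h2

lemma aux_measure_nonpos {Ω : Type*} [MeasurableSpace Ω] (P : Measure Ω) (T : Ω → ℝ) (a : ℝ)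
    (ha : a < 0)
    (h : ∀ w : ℝ, 0 < w → P {ω | T ω ≤ w} = ENNReal.ofReal (Real.exp (a / w))) :
    P {ω | T ω ≤ 0} = 0 := by
  have hle : ∀ n : ℕ, P {ω | T ω ≤ 0} ≤ ENNReal.ofReal (Real.exp ((n + 1 : ℕ) * a)) := by
    intro n
    have hpos : (0:ℝ) < 1 / ((n:ℝ) + 1) := by positivity
    calc P {ω | T ω ≤ 0} ≤ P {ω | T ω ≤ 1 / ((n:ℝ) + 1)} :=
          measure_mono (fun ω h0 => le_trans h0 hpos.le)
      _ = ENNReal.ofReal (Real.exp (a / (1 / ((n:ℝ) + 1)))) := h _ hpos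
      _ = ENNReal.ofReal (Real.exp ((n + 1 : ℕ) * a)) := by
          congr 1
          rw [div_eq_mul_inv, one_div, inv_inv]
          push_cast
          ring
  have htend : Tendsto (fun n : ℕ => ENNReal.ofReal (Real.exp ((n + 1 : ℕ) * a))) atTop (𝓝 0) := by
    have hexp : Tendsto (fun n : ℕ => Real.exp ((n + 1 : ℕ) * a)) atTop (𝓝 0) := by
      have : ∀ n : ℕ, Real.exp ((n + 1 : ℕ) * a) = Real.exp a ^ (n + 1) := by
        intro n; rw [← Real.exp_nat_mul]
      simp only [this]
      exact (tendsto_pow_atTop_nhds_zero_of_lt_one (Real.exp_nonneg a)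
        (Real.exp_lt_one_iff.mpr ha)).comp (tendsto_add_atTop_nat 1)
    simpa [Function.comp_def] using (ENNReal.continuous_ofReal.tendsto 0).comp hexp
  exact le_zero_iff.mp (ge_of_tendsto' htend hle)

lemma aux_cond_iff (u t : ℝ) (hu : u ∈ Set.Ioo (0:ℝ) 1) (ht : 0 < t) :
    (u < Real.exp (-1 / imsTransform t)) ↔ t < -1 / Real.log (1 - u) := by
  have h1u : 0 < 1 - u := by linarith [hu.2]
  have hLu : Real.log (1 - u) < 0 := Real.log_neg h1u (by linarith [hu.1])
  have het : -1 / t < 0 := div_neg_of_neg_of_pos (by norm_num) ht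
  have he1 : Real.exp (-1 / t) < 1 := Real.exp_lt_one_iff.mpr het
  have hv : 0 < 1 - Real.exp (-1 / t) := by linarith
  have hL : Real.log (1 - Real.exp (-1 / t)) < 0 :=
    Real.log_neg hv (by linarith [Real.exp_pos (-1 / t)])
  unfold imsTransform
  rw [show -1 / (-1 / Real.log (1 - Real.exp (-1 / t))) = Real.log (1 - Real.exp (-1 / t)) by
    field_simp]
  rw [Real.exp_log hv]
  constructor
  · intro hlt
    -- u < 1 - exp(-1/t)  ⟹  exp(-1/t) < 1 - u  ⟹  -1/t < log(1-u)
    have h1 : Real.exp (-1 / t) < 1 - u := by linarith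
    have h2 : -1 / t < Real.log (1 - u) := by
      have := Real.log_lt_log (Real.exp_pos _) h1
      rwa [Real.log_exp] at this
    rw [div_lt_iff₀ ht] at h2
    rw [lt_div_iff_of_neg hLu]
    nlinarith
  · intro hlt
    rw [lt_div_iff_of_neg hLu] at hlt
    have h2 : -1 / t < Real.log (1 - u) := by
      rw [div_lt_iff₀ ht]
      nlinarith
    have h3 : Real.exp (-1 / t) < 1 - u := by
      calc Real.exp (-1 / t) < Real.exp (Real.log (1 - u)) := Real.exp_lt_exp.mpr h2
        _ = 1 - u := Real.exp_log h1u
    linarith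

theorem inverted_max_stable_chibar
    {Ω : Type*} [MeasurableSpace Ω] (P : Measure Ω) [IsProbabilityMeasure P]
    (X1 X2 : Ω → ℝ) (hX1 : Measurable X1) (hX2 : Measurable X2)
    (hF1 : ∀ z : ℝ, 0 < z → P {ω | X1 ω ≤ z} = ENNReal.ofReal (Real.exp (-1 / z)))
    (hF2 : ∀ z : ℝ, 0 < z → P {ω | X2 ω ≤ z} = ENNReal.ofReal (Real.exp (-1 / z)))
    (θ : ℝ) (hθ : θ ∈ Set.Icc (1 : ℝ) 2)
    (hjoint : ∀ z : ℝ, 0 < z →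
      P {ω | X1 ω ≤ z ∧ X2 ω ≤ z} = ENNReal.ofReal (Real.exp (-θ / z))) :
    (∀ u ∈ Set.Ioo (0 : ℝ) 1,
      2 * Real.log (P {ω | u < Real.exp (-1 / imsTransform (X1 ω))}).toReal /
          Real.log (P {ω | u < Real.exp (-1 / imsTransform (X1 ω)) ∧
              u < Real.exp (-1 / imsTransform (X2 ω))}).toReal
        - 1 = 2 / θ - 1)
      ∧ (1 < θ → 2 / θ - 1 < 1) := by
  have hθ1 : (1:ℝ) ≤ θ := hθ.1
  have hθpos : (0:ℝ) < θ := by linarith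
  constructor
  · intro u hu
    have h1u : 0 < 1 - u := by linarith [hu.2]
    have hLu : Real.log (1 - u) < 0 := Real.log_neg h1u (by linarith [hu.1])
    set z : ℝ := -1 / Real.log (1 - u) with hzdef
    have hz : 0 < z := by
      rw [hzdef]
      exact div_pos_of_neg_of_neg (by norm_num) hLu
    -- null sets
    have hn1 : P {ω | X1 ω ≤ 0} = 0 := aux_measure_nonpos P X1 (-1) (by norm_num) hF1
    have hn2 : P {ω | X2 ω ≤ 0} = 0 := aux_measure_nonpos P X2 (-1) (by norm_num) hF2
    -- marginal
    have hA : P {ω | u < Real.exp (-1 / imsTransform (X1 ω))} =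
        ENNReal.ofReal (Real.exp (-1 / z)) := by
      rw [← aux_measure_lt P X1 (-1) hF1 z hz]
      apply le_antisymm
      · apply measure_mono
        intro ω hω
        simp only [Set.mem_setOf_eq] at *
        rcases le_or_gt (X1 ω) 0 with h0 | h0
        · linarith
        · exact (aux_cond_iff u (X1 ω) hu h0).mp hω
      · calc P {ω | X1 ω < z}
            ≤ P ({ω | u < Real.exp (-1 / imsTransform (X1 ω))} ∪ {ω | X1 ω ≤ 0}) := by
              apply measure_mono
              intro ω hω
              simp only [Set.mem_setOf_eq, Set.mem_union] at *
              rcases le_or_gt (X1 ω) 0 with h0 | h0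
              · exact Or.inr h0
              · exact Or.inl ((aux_cond_iff u (X1 ω) hu h0).mpr hω)
          _ ≤ P {ω | u < Real.exp (-1 / imsTransform (X1 ω))} + P {ω | X1 ω ≤ 0} :=
              measure_union_le _ _
          _ = P {ω | u < Real.exp (-1 / imsTransform (X1 ω))} := by rw [hn1, add_zero]
    -- joint
    have hmaxcdf : ∀ w : ℝ, 0 < w →
        P {ω | max (X1 ω) (X2 ω) ≤ w} = ENNReal.ofReal (Real.exp (-θ / w)) := by
      intro w hw
      have : {ω | max (X1 ω) (X2 ω) ≤ w} = {ω | X1 ω ≤ w ∧ X2 ω ≤ w} := by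
        ext ω; simp [max_le_iff]
      rw [this]
      exact hjoint w hw
    have hB : P {ω | u < Real.exp (-1 / imsTransform (X1 ω)) ∧
        u < Real.exp (-1 / imsTransform (X2 ω))} = ENNReal.ofReal (Real.exp (-θ / z)) := by
      rw [← aux_measure_lt P (fun ω => max (X1 ω) (X2 ω)) (-θ) hmaxcdf z hz]
      apply le_antisymm
      · apply measure_mono
        intro ω hω
        simp only [Set.mem_setOf_eq, max_lt_iff] at *
        constructor
        · rcases le_or_gt (X1 ω) 0 with h0 | h0
          · linarith
          · exact (aux_cond_iff u (X1 ω) hu h0).mp hω.1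
        · rcases le_or_gt (X2 ω) 0 with h0 | h0
          · linarith
          · exact (aux_cond_iff u (X2 ω) hu h0).mp hω.2
      · calc P {ω | max (X1 ω) (X2 ω) < z}
            ≤ P ({ω | u < Real.exp (-1 / imsTransform (X1 ω)) ∧
                u < Real.exp (-1 / imsTransform (X2 ω))} ∪
                ({ω | X1 ω ≤ 0} ∪ {ω | X2 ω ≤ 0})) := by
              apply measure_mono
              intro ω hω
              simp only [Set.mem_setOf_eq, Set.mem_union, max_lt_iff] at *
              rcases le_or_gt (X1 ω) 0 with h0 | h0
              · exact Or.inr (Or.inl h0)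
              rcases le_or_gt (X2 ω) 0 with h0' | h0'
              · exact Or.inr (Or.inr h0')
              · exact Or.inl ⟨(aux_cond_iff u (X1 ω) hu h0).mpr hω.1,
                  (aux_cond_iff u (X2 ω) hu h0').mpr hω.2⟩
          _ ≤ P {ω | u < Real.exp (-1 / imsTransform (X1 ω)) ∧
                u < Real.exp (-1 / imsTransform (X2 ω))} +
                P ({ω | X1 ω ≤ 0} ∪ {ω | X2 ω ≤ 0}) := measure_union_le _ _
          _ ≤ P {ω | u < Real.exp (-1 / imsTransform (X1 ω)) ∧
                u < Real.exp (-1 / imsTransform (X2 ω))} +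
                (P {ω | X1 ω ≤ 0} + P {ω | X2 ω ≤ 0}) := by
              gcongr
              exact measure_union_le _ _
          _ = P {ω | u < Real.exp (-1 / imsTransform (X1 ω)) ∧
                u < Real.exp (-1 / imsTransform (X2 ω))} := by rw [hn1, hn2]; simp
    rw [hA, hB, ENNReal.toReal_ofReal (Real.exp_nonneg _),
      ENNReal.toReal_ofReal (Real.exp_nonneg _), Real.log_exp, Real.log_exp]
    have hz1 : -1 / z = Real.log (1 - u) := by
      rw [hzdef]; field_simp
    have hzθ : -θ / z = θ * Real.log (1 - u) := by
      rw [hzdef]; field_simp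
    rw [hz1, hzθ]
    rw [show 2 * Real.log (1 - u) / (θ * Real.log (1 - u)) = 2 / θ by
      rw [mul_comm θ (Real.log (1 - u)), mul_comm 2 (Real.log (1 - u)),
        mul_div_mul_left _ _ hLu.ne]]
  · intro h1
    have : 2 / θ < 2 := by
      rw [div_lt_iff₀ hθpos]; linarith
    linarith
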